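/- Let R be a commutative local ring, let r be a natural number, and let M be an a×b matrix over R such that the (r−1)-determinantal ideal of M is the unit ideal (equivalently, some r×r minor of M is a unit of R) and the r-determinantal ideal of M is the zero ideal (all (r+1)×(r+1) minors of M vanish). Then there exist invertible matrices P ∈ GL(a,R) and Q ∈ GL(b,R) such that P·M·Q is the block matrix whose upper-left r×r block is the identity matrix and whose other blocks are zero. -/

import Mathlib

open Matrix

noncomputable def extEquiv {n r : ℕ} (f : Fin r → Fin n) (hf : Function.Injective f) :
    Fin r ⊕ Fin (n - r) ≃ Fin n := by
  classical
  have hr : Fintype.card {x : Fin n // x ∈ Set.range f} = r := by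
    have := Fintype.card_congr (Equiv.ofInjective f hf)
    simp only [Fintype.card_fin] at this
    convert this.symm
  have hcard : Fintype.card {x : Fin n // x ∉ Set.range f} = n - r := by
    rw [Fintype.card_subtype_compl, hr, Fintype.card_fin]
  exact ((Equiv.ofInjective f hf).sumCongr
      (Fintype.equivFinOfCardEq hcard).symm).trans
    (Equiv.sumCompl (· ∈ Set.range f))

@[simp] lemma extEquiv_inl {n r : ℕ} (f : Fin r → Fin n) (hf : Function.Injective f)
    (t : Fin r) : extEquiv f hf (Sum.inl t) = f t := by
  simp [extEquiv, Equiv.sumCompl]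

lemma sum_map_inj {α β : Type*} (c : β) :
    Function.Injective (Sum.map (id : α → α) (fun _ : Fin 1 => c)) := by
  rintro (x | x) (y | y) h
  · simpa using h
  · simp at h
  · simp at h
  · rw [Subsingleton.elim x y]


/-- The `r`-determinantal ideal of a matrix `M`: the ideal generated by the determinants of
all `(r+1) × (r+1)` submatrices of `M`. -/
def detIdeal {R : Type*} [CommRing R] {ι κ : Type*} (M : Matrix ι κ R) (r : ℕ) : Ideal R :=
  Ideal.span { x | ∃ (f : Fin (r + 1) → ι) (g : Fin (r + 1) → κ),
    Function.Injective f ∧ Function.Injective g ∧ x = (M.submatrix f g).det }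

/-- The `q × p` block matrix whose upper-left `l × l` block is `Matrix.diagonal d` and whose
other blocks are zero. -/
noncomputable def blockDiag {R : Type*} [CommRing R] {q p l : ℕ} (hq : l ≤ q) (hp : l ≤ p)
    (d : Fin l → R) : Matrix (Fin q) (Fin p) R :=
  Matrix.reindex (finSumFinEquiv.trans (finCongr (Nat.add_sub_cancel' hq)))
    (finSumFinEquiv.trans (finCongr (Nat.add_sub_cancel' hp)))
    (Matrix.fromBlocks (Matrix.diagonal d) 0 0 0)

/-- Over a local ring, if some `r × r` minor of `M` is a unit (i.e. `I_{r-1}(M)` is the unit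
ideal) and `I_r(M) = 0` (all `(r+1) × (r+1)` minors vanish), then `M` is equivalent, via
invertible row and column operations, to the block matrix with upper-left `r × r` identity
block and zero elsewhere. -/
theorem block_identity_of_unit_minor {R : Type*} [CommRing R] [IsLocalRing R] {a b r : ℕ}
    (M : Matrix (Fin a) (Fin b) R)
    (h1 : ∃ (f : Fin r → Fin a) (g : Fin r → Fin b),
      Function.Injective f ∧ Function.Injective g ∧ IsUnit (M.submatrix f g).det)
    (h2 : detIdeal M r = ⊥) :
    ∃ (hq : r ≤ a) (hp : r ≤ b) (P : Matrix (Fin a) (Fin a) R)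
      (Q : Matrix (Fin b) (Fin b) R), IsUnit P ∧ IsUnit Q ∧
      P * M * Q = blockDiag hq hp (fun _ => (1 : R)) := by
  classical
  obtain ⟨f, g, hf, hg, hunit⟩ := h1
  have hq : r ≤ a := by simpa using Fintype.card_le_of_injective f hf
  have hp : r ≤ b := by simpa using Fintype.card_le_of_injective g hg
  refine ⟨hq, hp, ?_⟩
  set ea : Fin r ⊕ Fin (a - r) ≃ Fin a := extEquiv f hf with hea
  set eb : Fin r ⊕ Fin (b - r) ≃ Fin b := extEquiv g hg with heb
  set ea0 : Fin r ⊕ Fin (a - r) ≃ Fin a :=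
    finSumFinEquiv.trans (finCongr (Nat.add_sub_cancel' hq)) with hea0
  set eb0 : Fin r ⊕ Fin (b - r) ≃ Fin b :=
    finSumFinEquiv.trans (finCongr (Nat.add_sub_cancel' hp)) with heb0
  set N : Matrix (Fin r ⊕ Fin (a - r)) (Fin r ⊕ Fin (b - r)) R := M.submatrix ea eb with hN
  set A := N.toBlocks₁₁ with hA
  set B := N.toBlocks₁₂ with hB
  set C := N.toBlocks₂₁ with hC
  set D := N.toBlocks₂₂ with hD
  have hNblocks : N = Matrix.fromBlocks A B C D := (Matrix.fromBlocks_toBlocks N).symm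
  have hAeq : A = M.submatrix f g := by
    ext i j
    simp [hA, hN, Matrix.toBlocks₁₁, hea, heb]
  have hAdet : IsUnit A.det := by rw [hAeq]; exact hunit
  have : Invertible A := A.invertibleOfIsUnitDet hAdet
  -- Schur complement vanishes
  have hSchur : D - C * ⅟A * B = 0 := by
    ext i j
    have hF : Function.Injective
        (ea ∘ Sum.map id (fun _ : Fin 1 => i) ∘ finSumFinEquiv.symm) :=
      ea.injective.comp ((sum_map_inj i).comp finSumFinEquiv.symm.injective)
    have hG : Function.Injective
        (eb ∘ Sum.map id (fun _ : Fin 1 => j) ∘ finSumFinEquiv.symm) :=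
      eb.injective.comp ((sum_map_inj j).comp finSumFinEquiv.symm.injective)
    have hzero : (M.submatrix (ea ∘ Sum.map id (fun _ : Fin 1 => i) ∘ finSumFinEquiv.symm)
        (eb ∘ Sum.map id (fun _ : Fin 1 => j) ∘ finSumFinEquiv.symm)).det = 0 := by
      have hmem : (M.submatrix (ea ∘ Sum.map id (fun _ : Fin 1 => i) ∘ finSumFinEquiv.symm)
          (eb ∘ Sum.map id (fun _ : Fin 1 => j) ∘ finSumFinEquiv.symm)).det ∈ detIdeal M r :=
        Ideal.subset_span ⟨_, _, hF, hG, rfl⟩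
      rw [h2] at hmem
      simpa using hmem
    have hsub : M.submatrix (ea ∘ Sum.map id (fun _ : Fin 1 => i) ∘ finSumFinEquiv.symm)
        (eb ∘ Sum.map id (fun _ : Fin 1 => j) ∘ finSumFinEquiv.symm)
        = (Matrix.fromBlocks A (B.submatrix id (fun _ : Fin 1 => j))
            (C.submatrix (fun _ : Fin 1 => i) id)
            (D.submatrix (fun _ : Fin 1 => i) (fun _ : Fin 1 => j))).submatrix
          finSumFinEquiv.symm finSumFinEquiv.symm := by
      ext x y
      rcases h : finSumFinEquiv.symm x with x' | x' <;>
        rcases h' : finSumFinEquiv.symm y with y' | y' <;>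
          simp [h, h', hA, hB, hC, hD, Matrix.toBlocks₁₁, Matrix.toBlocks₁₂,
            Matrix.toBlocks₂₁, Matrix.toBlocks₂₂, hN]
    rw [hsub, Matrix.det_submatrix_equiv_self] at hzero
    rw [Matrix.det_fromBlocks₁₁] at hzero
    have h11 : (D.submatrix (fun _ : Fin 1 => i) (fun _ : Fin 1 => j)
        - C.submatrix (fun _ : Fin 1 => i) id * ⅟A * B.submatrix id (fun _ : Fin 1 => j)).det
        = (D - C * ⅟A * B) i j := by
      rw [Matrix.det_fin_one]
      simp [Matrix.mul_apply, Matrix.sub_apply]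
    rw [h11] at hzero
    have := hAdet.mul_right_eq_zero.mp hzero
    simpa using this
  have hD' : D = C * ⅟A * B := by rwa [sub_eq_zero] at hSchur
  -- block elimination
  set P' : Matrix (Fin r ⊕ Fin (a - r)) (Fin r ⊕ Fin (a - r)) R :=
    Matrix.fromBlocks (⅟A) 0 (-(C * ⅟A)) 1 with hP'
  set Q' : Matrix (Fin r ⊕ Fin (b - r)) (Fin r ⊕ Fin (b - r)) R :=
    Matrix.fromBlocks 1 (-(⅟A * B)) 0 1 with hQ'
  have e1 : (⅟A : Matrix (Fin r) (Fin r) R) * A = 1 := invOf_mul_self A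
  have e2 : C * ⅟A * A = C := by rw [Matrix.mul_assoc, e1, Matrix.mul_one]
  have key : P' * N * Q' = Matrix.fromBlocks 1 0 0 0 := by
    rw [hNblocks, hP', hQ', Matrix.fromBlocks_multiply, Matrix.fromBlocks_multiply]
    simp [hD', Matrix.mul_assoc]
  letI : Invertible (1 : Matrix (Fin (a-r)) (Fin (a-r)) R) := invertibleOne
  letI : Invertible (1 : Matrix (Fin r) (Fin r) R) := invertibleOne
  letI : Invertible (1 : Matrix (Fin (b-r)) (Fin (b-r)) R) := invertibleOne
  letI : Invertible P' := by
    rw [hP']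
    exact Matrix.fromBlocksZero₁₂Invertible (⅟A) (-(C * ⅟A)) (1 : Matrix (Fin (a-r)) (Fin (a-r)) R)
  letI : Invertible Q' := by
    rw [hQ']
    exact Matrix.fromBlocksZero₂₁Invertible (1 : Matrix (Fin r) (Fin r) R) (-(⅟A * B)) (1 : Matrix (Fin (b-r)) (Fin (b-r)) R)
  set P : Matrix (Fin a) (Fin a) R := P'.submatrix ea0.symm ea.symm with hP
  set Q : Matrix (Fin b) (Fin b) R := Q'.submatrix eb.symm eb0.symm with hQ
  have hPinv : P * (⅟P').submatrix ea.symm ea0.symm = 1 := by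
    rw [hP, Matrix.submatrix_mul_equiv, mul_invOf_self, Matrix.submatrix_one_equiv]
  have hQinv : (⅟Q').submatrix eb0.symm eb.symm * Q = 1 := by
    rw [hQ, Matrix.submatrix_mul_equiv, invOf_mul_self, Matrix.submatrix_one_equiv]
  have hPunit : IsUnit P := by
    rw [Matrix.isUnit_iff_isUnit_det]
    apply IsUnit.of_mul_eq_one (b := ((⅟P').submatrix ea.symm ea0.symm).det)
    rw [← Matrix.det_mul, hPinv, Matrix.det_one]
  have hQunit : IsUnit Q := by
    rw [Matrix.isUnit_iff_isUnit_det]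
    apply IsUnit.of_mul_eq_one (b := ((⅟Q').submatrix eb0.symm eb.symm).det)
    rw [mul_comm, ← Matrix.det_mul, hQinv, Matrix.det_one]
  have hM : M = N.submatrix ea.symm eb.symm := by
    rw [hN]
    ext x y
    simp
  refine ⟨P, Q, hPunit, hQunit, ?_⟩
  have hfinal : P * M * Q = (P' * N * Q').submatrix ea0.symm eb0.symm := by
    rw [hP, hQ, hM, Matrix.submatrix_mul_equiv, Matrix.submatrix_mul_equiv]
  rw [hfinal, key]
  unfold _root_.blockDiag
  rw [Matrix.reindex_apply, Matrix.diagonal_one]
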